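/- Let M, N ∈ ℝ^{p×q} be real matrices and let k be an integer with 1 ≤ k ≤ min(p,q). Then ‖M‖_* − ‖N‖_* ≤ Σ_{i=k+1}^{min(p,q)} σ_i(M) + k·‖M − N‖. -/

import Mathlib

open scoped BigOperators

theorem Matrix.isHermitian_transpose_mul_self {m n : Type*} [Fintype m] {α : Type*}
    [CommRing α] [StarRing α] [TrivialStar α] (A : Matrix m n α) :
    (Matrix.transpose A * A).IsHermitian :=
  Matrix.isHermitian_iff_isSymm.mpr (by
    rw [Matrix.IsSymm, Matrix.transpose_mul, Matrix.transpose_transpose])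

/-- `sval M i` is the `i`-th (0-indexed, in nonincreasing order) singular value of the
real matrix `M`, i.e. the square root of the `i`-th largest eigenvalue of `MᵀM`,
with the convention that it is `0` out of range. -/
noncomputable def sval {p q : ℕ} (M : Matrix (Fin p) (Fin q) ℝ) : ℕ → ℝ := fun i =>
  if h : i < q then
    Real.sqrt ((Matrix.isHermitian_transpose_mul_self M).eigenvalues
      ((Tuple.sort (Matrix.isHermitian_transpose_mul_self M).eigenvalues) (Fin.rev ⟨i, h⟩)))
  else 0

/-- The spectral norm `‖M‖ = σ₁(M)`. -/
noncomputable def specNorm {p q : ℕ} (M : Matrix (Fin p) (Fin q) ℝ) : ℝ := sval M 0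

/-- The Ky Fan `k`-norm `‖M‖_k = σ₁(M) + ⋯ + σ_k(M)`. -/
noncomputable def kyFan {p q : ℕ} (M : Matrix (Fin p) (Fin q) ℝ) (k : ℕ) : ℝ :=
  ∑ i ∈ Finset.range k, sval M i

/-- The nuclear norm `‖M‖_* = Σᵢ σᵢ(M)`. -/
noncomputable def nucNorm {p q : ℕ} (M : Matrix (Fin p) (Fin q) ℝ) : ℝ :=
  kyFan M (min p q)

/-- The Frobenius norm `‖M‖_F`. -/
noncomputable def froNorm {p q : ℕ} (M : Matrix (Fin p) (Fin q) ℝ) : ℝ :=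
  Real.sqrt (∑ i, ∑ j, (M i j) ^ 2)

open Matrix Submodule Module
open scoped RealInnerProductSpace



variable {q : ℕ}

section quad

variable {F : Type*} [NormedAddCommGroup F] [InnerProductSpace ℝ F]

lemma quad_repr (v : OrthonormalBasis (Fin q) ℝ F) (T : F →ₗ[ℝ] F) (e : Fin q → ℝ)
    (hT : ∀ j, T (v j) = e j • v j) (x : F) :
    ⟪x, T x⟫ = ∑ j, e j * (v.repr x j) ^ 2 := by
  have hTx : T x = ∑ j, (e j * v.repr x j) • v j := by
    conv_lhs => rw [← v.sum_repr x]
    rw [map_sum]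
    refine Finset.sum_congr rfl fun j _ => ?_
    rw [_root_.map_smul, hT j, smul_smul, mul_comm]
  rw [hTx, inner_sum]
  refine Finset.sum_congr rfl fun j _ => ?_
  rw [real_inner_smul_right, real_inner_comm, ← OrthonormalBasis.repr_apply_apply]
  ring

lemma normsq_repr (v : OrthonormalBasis (Fin q) ℝ F) (x : F) :
    ‖x‖ ^ 2 = ∑ j, (v.repr x j) ^ 2 := by
  have := quad_repr v LinearMap.id (fun _ => 1) (fun j => by simp) x
  simpa [real_inner_self_eq_norm_sq] using this

lemma repr_eq_zero_of_not_mem (v : OrthonormalBasis (Fin q) ℝ F) (S : Finset (Fin q))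
    {x : F} (hx : x ∈ span ℝ (v '' ↑S)) {j : Fin q} (hj : j ∉ S) :
    v.repr x j = 0 := by
  rw [OrthonormalBasis.repr_apply_apply]
  induction hx using Submodule.span_induction with
  | mem y hy =>
    obtain ⟨m, hm, rfl⟩ := hy
    exact v.orthonormal.2 (fun h => hj (h ▸ hm))
  | zero => simp
  | add y z _ _ hy hz => rw [inner_add_right, hy, hz, add_zero]
  | smul c y _ hy => rw [inner_smul_right, hy, mul_zero]

lemma quad_le (v : OrthonormalBasis (Fin q) ℝ F) (T : F →ₗ[ℝ] F) (e : Fin q → ℝ)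
    (hT : ∀ j, T (v j) = e j • v j) (S : Finset (Fin q)) (c : ℝ)
    (hc : ∀ j ∈ S, e j ≤ c) {x : F} (hx : x ∈ span ℝ (v '' ↑S)) :
    ⟪x, T x⟫ ≤ c * ‖x‖ ^ 2 := by
  rw [quad_repr v T e hT x, normsq_repr v x, Finset.mul_sum]
  refine Finset.sum_le_sum fun j _ => ?_
  by_cases hj : j ∈ S
  · exact mul_le_mul_of_nonneg_right (hc j hj) (sq_nonneg _)
  · rw [repr_eq_zero_of_not_mem v S hx hj]; simp

lemma quad_ge (v : OrthonormalBasis (Fin q) ℝ F) (T : F →ₗ[ℝ] F) (e : Fin q → ℝ)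
    (hT : ∀ j, T (v j) = e j • v j) (S : Finset (Fin q)) (c : ℝ)
    (hc : ∀ j ∈ S, c ≤ e j) {x : F} (hx : x ∈ span ℝ (v '' ↑S)) :
    c * ‖x‖ ^ 2 ≤ ⟪x, T x⟫ := by
  rw [quad_repr v T e hT x, normsq_repr v x, Finset.mul_sum]
  refine Finset.sum_le_sum fun j _ => ?_
  by_cases hj : j ∈ S
  · exact mul_le_mul_of_nonneg_right (hc j hj) (sq_nonneg _)
  · rw [repr_eq_zero_of_not_mem v S hx hj]; simp

lemma finrank_span_onb (v : OrthonormalBasis (Fin q) ℝ F) (S : Finset (Fin q)) :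
    finrank ℝ (span ℝ (v '' ↑S)) = S.card := by
  have li : LinearIndependent ℝ (fun x : (↑S : Set (Fin q)) => v ↑x) :=
    v.orthonormal.linearIndependent.comp
      (Subtype.val : (↑S : Set (Fin q)) → Fin q) Subtype.val_injective
  rw [Set.image_eq_range, finrank_span_eq_card li]; simp

end quad



variable {p q : ℕ}

lemma sval_eq (M : Matrix (Fin p) (Fin q) ℝ) {i : ℕ} (hi : i < q) :
    sval M i = Real.sqrt ((Matrix.isHermitian_transpose_mul_self M).eigenvalues
      ((Tuple.sort (Matrix.isHermitian_transpose_mul_self M).eigenvalues) (Fin.rev ⟨i, hi⟩))) := by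
  simp only [sval, dif_pos hi]

lemma sval_nonneg (M : Matrix (Fin p) (Fin q) ℝ) (i : ℕ) : 0 ≤ sval M i := by
  unfold sval
  split <;> simp [Real.sqrt_nonneg]

lemma eig_nonneg (M : Matrix (Fin p) (Fin q) ℝ) (j : Fin q) :
    0 ≤ (Matrix.isHermitian_transpose_mul_self M).eigenvalues j := by
  have h : (Mᵀ * M).PosSemidef := by
    have := Matrix.posSemidef_conjTranspose_mul_self M
    rwa [conjTranspose_eq_transpose_of_trivial] at this
  exact h.eigenvalues_nonneg j

lemma sq_sval (M : Matrix (Fin p) (Fin q) ℝ) {i : ℕ} (hi : i < q) :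
    sval M i ^ 2 = (Matrix.isHermitian_transpose_mul_self M).eigenvalues
      ((Tuple.sort (Matrix.isHermitian_transpose_mul_self M).eigenvalues) (Fin.rev ⟨i, hi⟩)) := by
  rw [sval_eq M hi, Real.sq_sqrt (eig_nonneg M _)]

lemma toEuclideanLin_eig (M : Matrix (Fin p) (Fin q) ℝ) (j : Fin q) :
    toEuclideanLin (Mᵀ * M) ((Matrix.isHermitian_transpose_mul_self M).eigenvectorBasis j)
      = (Matrix.isHermitian_transpose_mul_self M).eigenvalues j •
        (Matrix.isHermitian_transpose_mul_self M).eigenvectorBasis j := by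
  have h := (Matrix.isHermitian_transpose_mul_self M).mulVec_eigenvectorBasis j
  rw [Matrix.toEuclideanLin_apply]
  apply (WithLp.equiv 2 (Fin q → ℝ)).injective
  simpa using h

lemma inner_quad (M : Matrix (Fin p) (Fin q) ℝ) (x : EuclideanSpace ℝ (Fin q)) :
    ⟪x, toEuclideanLin (Mᵀ * M) x⟫ =
      ‖(WithLp.equiv 2 (Fin p → ℝ)).symm (M *ᵥ (WithLp.equiv 2 (Fin q → ℝ)) x)‖ ^ 2 := by
  set y := (WithLp.equiv 2 (Fin q → ℝ)) x with hy
  have hx : x = (WithLp.equiv 2 (Fin q → ℝ)).symm y := by simp [hy]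
  rw [← real_inner_self_eq_norm_sq, hx,
    WithLp.equiv_symm_apply, EuclideanSpace.inner_toLp_toLp, toEuclideanLin_apply_piLp_toLp,
    EuclideanSpace.inner_toLp_toLp]
  simp only [star_trivial]
  rw [dotProduct_comm, ← Matrix.mulVec_mulVec, dotProduct_mulVec, Matrix.vecMul_transpose]
  rfl

lemma sval_weyl (M N : Matrix (Fin p) (Fin q) ℝ) {i : ℕ} (hi : i < q) :
    sval M i ≤ sval N i + sval (M - N) 0 := by
  have hq : 0 < q := by omega
  set D := M - N with hD
  set hMh := Matrix.isHermitian_transpose_mul_self M with hMh_def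
  set hNh := Matrix.isHermitian_transpose_mul_self N with hNh_def
  set hDh := Matrix.isHermitian_transpose_mul_self D with hDh_def
  set vM := hMh.eigenvectorBasis
  set vN := hNh.eigenvectorBasis
  set vD := hDh.eigenvectorBasis
  set eM := hMh.eigenvalues
  set eN := hNh.eigenvalues
  set eD := hDh.eigenvalues
  set σM := Tuple.sort eM
  set σN := Tuple.sort eN
  set σD := Tuple.sort eD
  set iq : Fin q := ⟨i, hi⟩
  set SU : Finset (Fin q) := (Finset.Iic iq).image (fun j => σM (Fin.rev j)) with hSU
  set SW : Finset (Fin q) := (Finset.Iic (Fin.rev iq)).image σN with hSW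
  set U := span ℝ (vM '' ↑SU)
  set W := span ℝ (vN '' ↑SW)
  -- dimension count
  have hcU : SU.card = i + 1 := by
    have hinj : Function.Injective (fun j : Fin q => σM j.rev) :=
      fun a b hab => Fin.rev_injective (σM.injective hab)
    rw [hSU, Finset.card_image_of_injective _ hinj, Fin.card_Iic]
  have hcW : SW.card = q - i := by
    rw [hSW, Finset.card_image_of_injective _ (Equiv.injective σN), Fin.card_Iic]
    simp [Fin.val_rev, iq]
    omega
  have hfU : finrank ℝ U = i + 1 := by rw [finrank_span_onb, hcU]
  have hfW : finrank ℝ W = q - i := by rw [finrank_span_onb, hcW]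
  have hdim := Submodule.finrank_sup_add_finrank_inf_eq U W
  have hsup : finrank ℝ ↥(U ⊔ W) ≤ q := by
    have := Submodule.finrank_le (U ⊔ W)
    rwa [finrank_euclideanSpace_fin] at this
  have hpos : 0 < finrank ℝ ↥(U ⊓ W) := by omega
  have hne : U ⊓ W ≠ ⊥ := by
    intro h
    rw [h, finrank_bot] at hpos
    exact lt_irrefl 0 hpos
  obtain ⟨x, hxUW, hx0⟩ := (Submodule.ne_bot_iff _).mp hne
  set y := (WithLp.equiv 2 (Fin q → ℝ)) x with hy
  set zM := (WithLp.equiv 2 (Fin p → ℝ)).symm (M *ᵥ y) with hzM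
  set zN := (WithLp.equiv 2 (Fin p → ℝ)).symm (N *ᵥ y) with hzN
  set zD := (WithLp.equiv 2 (Fin p → ℝ)).symm (D *ᵥ y) with hzD
  have hxnorm : 0 < ‖x‖ := norm_pos_iff.mpr hx0
  have hxU : x ∈ U := hxUW.1
  have hxW : x ∈ W := hxUW.2
  have hMlow : eM (σM (Fin.rev iq)) * ‖x‖ ^ 2 ≤ ‖zM‖ ^ 2 := by
    rw [hzM, hy, ← inner_quad M x]
    refine quad_ge vM (toEuclideanLin (Mᵀ * M)) eM (toEuclideanLin_eig M) SU _ ?_ hxU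
    intro j hj
    obtain ⟨j', hj', rfl⟩ := Finset.mem_image.mp hj
    exact Tuple.monotone_sort eM (Fin.rev_le_rev.mpr (Finset.mem_Iic.mp hj'))
  have hNup : ‖zN‖ ^ 2 ≤ eN (σN (Fin.rev iq)) * ‖x‖ ^ 2 := by
    rw [hzN, hy, ← inner_quad N x]
    refine quad_le vN (toEuclideanLin (Nᵀ * N)) eN (toEuclideanLin_eig N) SW _ ?_ hxW
    intro j hj
    obtain ⟨j', hj', rfl⟩ := Finset.mem_image.mp hj
    exact Tuple.monotone_sort eN (Finset.mem_Iic.mp hj')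
  have hDup : ‖zD‖ ^ 2 ≤ eD (σD (Fin.rev ⟨0, hq⟩)) * ‖x‖ ^ 2 := by
    rw [hzD, hy, ← inner_quad D x]
    refine quad_le vD (toEuclideanLin (Dᵀ * D)) eD (toEuclideanLin_eig D) Finset.univ _ ?_ ?_
    · intro j _
      have hle : σD.symm j ≤ Fin.rev ⟨0, hq⟩ := by
        have h1 : ((σD.symm j : Fin q) : ℕ) < q := (σD.symm j).isLt
        rw [Fin.le_def, Fin.val_rev]
        simp only [Fin.val_mk]
        omega
      have h2 := Tuple.monotone_sort eD hle
      rwa [Function.comp_apply, Function.comp_apply, Equiv.apply_symm_apply] at h2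
    · have htop : span ℝ (⇑vD '' ↑(Finset.univ : Finset (Fin q))) = ⊤ := by
        rw [Finset.coe_univ, Set.image_univ, ← OrthonormalBasis.coe_toBasis vD]
        exact vD.toBasis.span_eq
      rw [htop]
      exact Submodule.mem_top
  have hsM : sval M i * ‖x‖ ≤ ‖zM‖ := by
    have h1 : (sval M i * ‖x‖) ^ 2 ≤ ‖zM‖ ^ 2 := by
      rw [mul_pow, sq_sval M hi]; exact hMlow
    calc sval M i * ‖x‖ = Real.sqrt ((sval M i * ‖x‖) ^ 2) :=
        (Real.sqrt_sq (mul_nonneg (sval_nonneg M i) (norm_nonneg x))).symm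
      _ ≤ Real.sqrt (‖zM‖ ^ 2) := Real.sqrt_le_sqrt h1
      _ = ‖zM‖ := Real.sqrt_sq (norm_nonneg _)
  have hsN : ‖zN‖ ≤ sval N i * ‖x‖ := by
    have h1 : ‖zN‖ ^ 2 ≤ (sval N i * ‖x‖) ^ 2 := by
      rw [mul_pow, sq_sval N hi]; exact hNup
    calc ‖zN‖ = Real.sqrt (‖zN‖ ^ 2) := (Real.sqrt_sq (norm_nonneg _)).symm
      _ ≤ Real.sqrt ((sval N i * ‖x‖) ^ 2) := Real.sqrt_le_sqrt h1
      _ = sval N i * ‖x‖ := Real.sqrt_sq (mul_nonneg (sval_nonneg N i) (norm_nonneg x))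
  have hsD : ‖zD‖ ≤ sval D 0 * ‖x‖ := by
    have h1 : ‖zD‖ ^ 2 ≤ (sval D 0 * ‖x‖) ^ 2 := by
      rw [mul_pow, sq_sval D hq]; exact hDup
    calc ‖zD‖ = Real.sqrt (‖zD‖ ^ 2) := (Real.sqrt_sq (norm_nonneg _)).symm
      _ ≤ Real.sqrt ((sval D 0 * ‖x‖) ^ 2) := Real.sqrt_le_sqrt h1
      _ = sval D 0 * ‖x‖ := Real.sqrt_sq (mul_nonneg (sval_nonneg D 0) (norm_nonneg x))
  have hv : M *ᵥ y = N *ᵥ y + D *ᵥ y := by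
    rw [hD, Matrix.sub_mulVec]
    abel
  have hzsum : zM = zN + zD := by
    rw [hzM, hzN, hzD, hv]
    rfl
  have hfin : sval M i * ‖x‖ ≤ (sval N i + sval D 0) * ‖x‖ := by
    calc sval M i * ‖x‖ ≤ ‖zM‖ := hsM
      _ = ‖zN + zD‖ := by rw [hzsum]
      _ ≤ ‖zN‖ + ‖zD‖ := norm_add_le _ _
      _ ≤ sval N i * ‖x‖ + sval D 0 * ‖x‖ := add_le_add hsN hsD
      _ = (sval N i + sval D 0) * ‖x‖ := by ring
  exact le_of_mul_le_mul_right hfin hxnorm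

open Matrix

/-- Lemma 4 of the paper:
`‖M‖_* − ‖N‖_* ≤ Σ_{i=k+1}^{min(p,q)} σᵢ(M) + k‖M − N‖`. -/
theorem nucNorm_sub_le_tail_add_kyFan_pert
    {p q : ℕ} (M N : Matrix (Fin p) (Fin q) ℝ)
    (k : ℕ) (hk1 : 1 ≤ k) (hk : k ≤ min p q) :
    nucNorm M - nucNorm N ≤
      (∑ i ∈ Finset.Ico k (min p q), sval M i) + (k : ℝ) * specNorm (M - N) := by
  have hkq : k ≤ q := le_trans hk (min_le_right p q)
  have hD0 : 0 ≤ sval (M - N) 0 := sval_nonneg _ _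
  have hsplit : nucNorm M = kyFan M k + ∑ i ∈ Finset.Ico k (min p q), sval M i := by
    rw [nucNorm, kyFan, kyFan, Finset.sum_range_add_sum_Ico _ hk]
  have hterm : ∀ i ∈ Finset.range k, sval M i ≤ sval N i + sval (M - N) 0 := by
    intro i hi
    exact sval_weyl M N (lt_of_lt_of_le (Finset.mem_range.mp hi) hkq)
  have h1 : kyFan M k ≤ kyFan N k + (k : ℝ) * sval (M - N) 0 := by
    calc kyFan M k ≤ ∑ i ∈ Finset.range k, (sval N i + sval (M - N) 0) :=
        Finset.sum_le_sum hterm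
      _ = kyFan N k + (k : ℝ) * sval (M - N) 0 := by
        rw [Finset.sum_add_distrib, Finset.sum_const, Finset.card_range, kyFan,
          nsmul_eq_mul]
  have h2 : kyFan N k ≤ nucNorm N := by
    refine Finset.sum_le_sum_of_subset_of_nonneg (Finset.range_subset_range.mpr hk) ?_
    intro i _ _
    exact sval_nonneg N i
  rw [hsplit, specNorm]
  linarith
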